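/- (Characterization of simultaneously Hamiltonian matrices.) A 4n×4n real matrix A satisfies both Aᵀ𝕀 + 𝕀A = 0 and Aᵀ𝕁 + 𝕁A = 0 if and only if there exist a Hamiltonian 2n×2n real matrix R (RᵀJ + JR = 0) and a symmetric 2n×2n real matrix S such that A is the block matrix A = [[R, S],[−J S J, −Rᵀ]]. -/
import Mathlib


open Matrix

/-- The standard 2n×2n symplectic matrix `J = [[0, I],[−I, 0]]`. -/
def Jstd (n : ℕ) : Matrix (Fin n ⊕ Fin n) (Fin n ⊕ Fin n) ℝ :=
  Matrix.fromBlocks 0 1 (-1) 0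

/-- The 4n×4n matrix `𝕀 = [[0, −I_{2n}],[I_{2n}, 0]]`. -/
def bbI (n : ℕ) :
    Matrix ((Fin n ⊕ Fin n) ⊕ (Fin n ⊕ Fin n)) ((Fin n ⊕ Fin n) ⊕ (Fin n ⊕ Fin n)) ℝ :=
  Matrix.fromBlocks 0 (-1) 1 0

/-- The 4n×4n matrix `𝕁 = [[J, 0],[0, Jᵀ]]`. -/
def bbJ (n : ℕ) :
    Matrix ((Fin n ⊕ Fin n) ⊕ (Fin n ⊕ Fin n)) ((Fin n ⊕ Fin n) ⊕ (Fin n ⊕ Fin n)) ℝ :=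
  Matrix.fromBlocks (Jstd n) 0 0 (Jstd n)ᵀ

/-- The 4n×4n matrix `𝕂 = [[0, J],[J, 0]]`. -/
def bbK (n : ℕ) :
    Matrix ((Fin n ⊕ Fin n) ⊕ (Fin n ⊕ Fin n)) ((Fin n ⊕ Fin n) ⊕ (Fin n ⊕ Fin n)) ℝ :=
  Matrix.fromBlocks 0 (Jstd n) (Jstd n) 0

lemma Jstd_transpose (n : ℕ) : (Jstd n)ᵀ = -(Jstd n) := by
  simp [Jstd, Matrix.fromBlocks_transpose, Matrix.fromBlocks_neg]

lemma Jstd_mul_Jstd (n : ℕ) : Jstd n * Jstd n = -1 := by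
  have h1 : (1 : Matrix (Fin n ⊕ Fin n) (Fin n ⊕ Fin n) ℝ) = Matrix.fromBlocks 1 0 0 1 :=
    Matrix.fromBlocks_one.symm
  rw [show (-1 : Matrix (Fin n ⊕ Fin n) (Fin n ⊕ Fin n) ℝ)
      = -(Matrix.fromBlocks 1 0 0 1) by rw [← h1],
    Matrix.fromBlocks_neg]
  simp [Jstd, Matrix.fromBlocks_multiply]

/-- `A` is Hamiltonian for both `ω_𝕀` and `ω_𝕁` iff it is of the block
form `[[R, S],[−JSJ, −Rᵀ]]` with `R` Hamiltonian and `S` symmetric. -/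
theorem doubly_hamiltonian_iff (n : ℕ) (hn : 1 ≤ n)
    (A : Matrix ((Fin n ⊕ Fin n) ⊕ (Fin n ⊕ Fin n)) ((Fin n ⊕ Fin n) ⊕ (Fin n ⊕ Fin n)) ℝ) :
    (Aᵀ * bbI n + bbI n * A = 0 ∧ Aᵀ * bbJ n + bbJ n * A = 0) ↔
      ∃ R S : Matrix (Fin n ⊕ Fin n) (Fin n ⊕ Fin n) ℝ,
        Rᵀ * Jstd n + Jstd n * R = 0 ∧ Sᵀ = S ∧
        A = Matrix.fromBlocks R S (-(Jstd n * S * Jstd n)) (-Rᵀ) := by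
  have hJT : (Jstd n)ᵀ = -(Jstd n) := Jstd_transpose n
  have hJJ : Jstd n * Jstd n = -1 := Jstd_mul_Jstd n
  have hzero : (0 : Matrix ((Fin n ⊕ Fin n) ⊕ (Fin n ⊕ Fin n)) ((Fin n ⊕ Fin n) ⊕ (Fin n ⊕ Fin n)) ℝ)
      = Matrix.fromBlocks 0 0 0 0 := by simp
  constructor
  · rintro ⟨h1, h2⟩
    set B₁ := A.toBlocks₁₁
    set B₂ := A.toBlocks₁₂
    set B₃ := A.toBlocks₂₁
    set B₄ := A.toBlocks₂₂
    have hA : A = Matrix.fromBlocks B₁ B₂ B₃ B₄ := (Matrix.fromBlocks_toBlocks A).symm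
    rw [hA] at h1 h2
    rw [bbI, Matrix.fromBlocks_transpose, Matrix.fromBlocks_multiply,
      Matrix.fromBlocks_multiply, Matrix.fromBlocks_add, hzero, Matrix.fromBlocks_inj] at h1
    rw [bbJ, Matrix.fromBlocks_transpose, Matrix.fromBlocks_multiply,
      Matrix.fromBlocks_multiply, Matrix.fromBlocks_add, hzero, Matrix.fromBlocks_inj] at h2
    obtain ⟨e11, e12, e13, e14⟩ := h1
    obtain ⟨f11, f12, f13, f14⟩ := h2
    simp only [Matrix.mul_zero, Matrix.zero_mul, zero_add, add_zero, mul_one, Matrix.mul_one,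
      Matrix.one_mul, Matrix.mul_neg, Matrix.neg_mul] at e11 e12 e13 e14 f11 f12 f13 f14
    have hB3T : B₃ᵀ = B₃ := by rwa [← sub_eq_add_neg, sub_eq_zero] at e11
    have hB2T : B₂ᵀ = B₂ := neg_add_eq_zero.mp e14
    have hB4 : B₄ = -B₁ᵀ := by
      have h := neg_add_eq_zero.mp e12
      rw [h, neg_neg]
    have hB3 : B₃ = -(Jstd n * B₂ * Jstd n) := by
      rw [hB3T, hJT] at f12
      have h : Jstd n * B₂ = B₃ * Jstd n := by
        have h0 : -(B₃ * Jstd n) + Jstd n * B₂ = 0 := by rw [← f12]; noncomm_ring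
        exact (neg_add_eq_zero.mp h0).symm
      calc B₃ = -(B₃ * (Jstd n * Jstd n)) := by rw [hJJ]; simp
        _ = -(Jstd n * B₂ * Jstd n) := by rw [← Matrix.mul_assoc, ← h]
    refine ⟨B₁, B₂, f11, hB2T, ?_⟩
    rw [hA, hB3, hB4]
  · rintro ⟨R, S, hR, hS, rfl⟩
    have hRJ : R * Jstd n + Jstd n * Rᵀ = 0 := by
      have h : Jstd n * (Rᵀ * Jstd n + Jstd n * R) * Jstd n = 0 := by rw [hR]; simp
      have h2 : -(Jstd n * Rᵀ + R * Jstd n) = 0 := by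
        rw [← h]
        rw [show Jstd n * (Rᵀ * Jstd n + Jstd n * R) * Jstd n
            = Jstd n * Rᵀ * (Jstd n * Jstd n) + (Jstd n * Jstd n) * (R * Jstd n) by noncomm_ring,
          hJJ]
        noncomm_ring
      rw [neg_eq_zero] at h2
      rw [add_comm]; exact h2
    constructor
    · rw [bbI, Matrix.fromBlocks_transpose, Matrix.fromBlocks_multiply,
        Matrix.fromBlocks_multiply, Matrix.fromBlocks_add, hzero, Matrix.fromBlocks_inj]
      refine ⟨?_, ?_, ?_, ?_⟩
      · simp only [Matrix.transpose_neg, Matrix.transpose_mul, hJT, hS,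
          Matrix.neg_mul, Matrix.mul_neg, neg_neg, Matrix.mul_assoc]
        simp [Matrix.mul_assoc]
      · simp
      · simp
      · simp [hS]
    · rw [bbJ, Matrix.fromBlocks_transpose, Matrix.fromBlocks_multiply,
        Matrix.fromBlocks_multiply, Matrix.fromBlocks_add, hzero, Matrix.fromBlocks_inj]
      refine ⟨?_, ?_, ?_, ?_⟩
      · simpa using hR
      · simp only [Matrix.transpose_neg, Matrix.transpose_mul, hJT, hS, Matrix.mul_zero,
          Matrix.zero_mul, zero_add, add_zero, Matrix.neg_mul, Matrix.mul_neg, neg_neg,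
          Matrix.mul_assoc]
        rw [hJJ]; simp
      · simp only [hS, hJT, Matrix.mul_zero, Matrix.zero_mul, zero_add, add_zero,
          Matrix.neg_mul, Matrix.mul_neg, neg_neg, Matrix.mul_assoc]
        rw [show Jstd n * (Jstd n * (S * Jstd n)) = (Jstd n * Jstd n) * (S * Jstd n) from
          (Matrix.mul_assoc _ _ _).symm, hJJ]
        simp
      · simp only [Matrix.transpose_neg, Matrix.transpose_transpose, hJT, Matrix.mul_zero,
          Matrix.zero_mul, zero_add, add_zero, Matrix.neg_mul, Matrix.mul_neg, neg_neg,
          Matrix.mul_assoc]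
        simpa [Matrix.mul_assoc] using hRJ
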